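/- Let r ≥ 1 and g ∈ ℕ. For every finite simple graph G whose maximum degree is at most r and whose girth is at least g, there exists a finite simple r-regular graph G' with girth at least g that contains G as an induced subgraph; that is, there is an injective map from the vertices of G to the vertices of G' under which two vertices of G are adjacent in G if and only if their images are adjacent in G'. -/

import Mathlib

set_option linter.unusedSectionVars false

open Function List

namespace EmbedRegAux

variable {A : Type} [DecidableEq A] [Fintype A] {g : ℕ}

/-- Ball of radius `g` in the free group. -/
abbrev Ball (A : Type) [DecidableEq A] (g : ℕ) : Type := {x : FreeGroup A // x.toWord.length ≤ g}

noncomputable instance : Fintype (Ball A g) := by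
  apply Fintype.ofInjective (fun (x : Ball A g) (i : Fin (g+1)) => x.1.toWord[i.1]?)
  intro x y h
  apply Subtype.ext
  apply FreeGroup.toWord_injective
  apply List.ext_getElem?
  intro n
  by_cases hn : n < g + 1
  · exact congrFun h ⟨n, hn⟩
  · rw [List.getElem?_eq_none (le_trans y.2 (by omega)), List.getElem?_eq_none (le_trans x.2 (by omega))]

/-- Equivalence between the sets where left multiplication by `of t` resp. its inverse
stays in the ball. -/
noncomputable def ballEquiv (A : Type) [DecidableEq A] (g : ℕ) (t : A) :
    {x : Ball A g // (FreeGroup.of t * x.1).toWord.length ≤ g} ≃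
      {x : Ball A g // ((FreeGroup.of t)⁻¹ * x.1).toWord.length ≤ g} where
  toFun x := ⟨⟨FreeGroup.of t * x.1.1, x.2⟩, by simpa using x.1.2⟩
  invFun y := ⟨⟨(FreeGroup.of t)⁻¹ * y.1.1, y.2⟩, by simpa using y.1.2⟩
  left_inv x := by
    apply Subtype.ext; apply Subtype.ext; simp
  right_inv y := by
    apply Subtype.ext; apply Subtype.ext; simp

/-- The generator permutations of the ball. -/
noncomputable def perm (A : Type) [DecidableEq A] [Fintype A] (g : ℕ) (t : A) :
    Equiv.Perm (Ball A g) :=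
  Equiv.extendSubtype (ballEquiv A g t)

theorem perm_apply (t : A) (x : FreeGroup A) (hx : x.toWord.length ≤ g)
    (hx2 : (FreeGroup.of t * x).toWord.length ≤ g) :
    perm A g t ⟨x, hx⟩ = ⟨FreeGroup.of t * x, hx2⟩ := by
  rw [perm, Equiv.extendSubtype_apply_of_mem (ballEquiv A g t) ⟨x, hx⟩ hx2]
  rfl

theorem perm_inv_apply (t : A) (x : FreeGroup A) (hx : x.toWord.length ≤ g)
    (hx2 : ((FreeGroup.of t)⁻¹ * x).toWord.length ≤ g) :
    (perm A g t)⁻¹ ⟨x, hx⟩ = ⟨(FreeGroup.of t)⁻¹ * x, hx2⟩ := by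
  have : perm A g t ⟨(FreeGroup.of t)⁻¹ * x, hx2⟩ = ⟨x, hx⟩ := by
    rw [perm_apply t _ hx2 (by simpa using hx)]
    simp
  rw [← this]; simp

/-- Signed letter as an element of the free group. -/
def iota (a : A × Bool) : FreeGroup A := cond a.2 (FreeGroup.of a.1) (FreeGroup.of a.1)⁻¹

/-- Signed letter as a permutation of the ball. -/
noncomputable def rho (A : Type) [DecidableEq A] [Fintype A] (g : ℕ) (a : A × Bool) :
    Equiv.Perm (Ball A g) := cond a.2 (perm A g a.1) (perm A g a.1)⁻¹

theorem rho_apply (a : A × Bool) (x : FreeGroup A) (hx : x.toWord.length ≤ g)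
    (hx2 : (iota a * x).toWord.length ≤ g) :
    rho A g a ⟨x, hx⟩ = ⟨iota a * x, hx2⟩ := by
  obtain ⟨t, _ | _⟩ := a
  · exact perm_inv_apply t x hx hx2
  · exact perm_apply t x hx hx2

theorem rho_not (a : A × Bool) : rho A g (a.1, !a.2) = (rho A g a)⁻¹ := by
  obtain ⟨t, _ | _⟩ := a <;> simp [rho]

/-- A reduced word. -/
def IsRed (L : List (A × Bool)) : Prop :=
  List.Chain' (fun x y => ¬(x.1 = y.1 ∧ x.2 = !y.2)) L

theorem IsRed.tail {L : List (A × Bool)} (h : IsRed L) : IsRed L.tail := List.IsChain.tail h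

theorem reduce_eq_self {L : List (A × Bool)} (h : IsRed L) : FreeGroup.reduce L = L := by
  induction L with
  | nil => rfl
  | cons x L ih =>
    rw [FreeGroup.reduce.cons, ih h.tail]
    cases L with
    | nil => rfl
    | cons y L' =>
      have := (List.isChain_cons.1 h).1 y rfl
      simp only [this, if_false]

theorem toWord_mk_isRed {L : List (A × Bool)} (h : IsRed L) : (FreeGroup.mk L).toWord = L := by
  rw [FreeGroup.toWord_mk, reduce_eq_self h]

theorem mk_cons (a : A × Bool) (L : List (A × Bool)) :
    FreeGroup.mk (a :: L) = iota a * FreeGroup.mk L := by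
  have : FreeGroup.mk [a] = iota a := by
    obtain ⟨t, _ | _⟩ := a
    · show FreeGroup.mk [(t, false)] = (FreeGroup.of t)⁻¹
      rw [show (FreeGroup.of t : FreeGroup A) = FreeGroup.mk [(t, true)] from rfl,
        FreeGroup.inv_mk]
      rfl
    · rfl
  rw [← this, FreeGroup.mul_mk]
  rfl

theorem ball_prod (L : List (A × Bool)) (h : IsRed L) (hL : L.length ≤ g) :
    (L.map (rho A g)).prod ⟨1, by simp⟩
      = ⟨FreeGroup.mk L, by rw [toWord_mk_isRed h]; exact hL⟩ := by
  induction L with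
  | nil =>
    simp only [List.map_nil, List.prod_nil]
    apply Subtype.ext
    simp [FreeGroup.one_eq_mk]
  | cons a L ih =>
    simp only [List.map_cons, List.prod_cons, Equiv.Perm.mul_apply]
    rw [ih h.tail (le_trans (Nat.le_succ _) hL)]
    rw [rho_apply a _ _ (by rw [← mk_cons, toWord_mk_isRed h]; exact hL)]
    apply Subtype.ext
    exact (mk_cons a L).symm

theorem prod_ne_one (L : List (A × Bool)) (h : IsRed L) (hne : L ≠ []) (hL : L.length ≤ g) :
    (L.map (rho A g)).prod ≠ 1 := by
  intro h1
  have := ball_prod L h hL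
  rw [h1] at this
  have : (1 : FreeGroup A) = FreeGroup.mk L := congrArg Subtype.val this
  have : ([] : List (A × Bool)) = L := by
    rw [← FreeGroup.toWord_one (α := A), this, toWord_mk_isRed h]
  exact hne this.symm

theorem IsRed.reverse {L : List (A × Bool)} (h : IsRed L) : IsRed L.reverse := by
  unfold IsRed List.Chain'
  rw [List.isChain_reverse]
  refine List.IsChain.imp ?_ h
  rintro x y hxy ⟨h1, h2⟩
  exact hxy ⟨h1.symm, by rw [h2, Bool.not_not]⟩

section Graph

variable {V : Type} [DecidableEq V] [Fintype V] (G : SimpleGraph V) [DecidableRel G.Adj]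
  (r g : ℕ)

/-- Generator indices: one for each potential cube edge. -/
abbrev Sg (V : Type) (r : ℕ) : Type := V × Fin r × (Fin r → Bool)

/-- Vertices of the big graph. -/
abbrev Vrt (V : Type) [DecidableEq V] (r g : ℕ) : Type :=
  V × ((Fin r → Bool) × Equiv.Perm (Ball (Sg V r) g))

variable {r}

/-- Flip the `k`-th coordinate. -/
def flp (k : Fin r) (x : Fin r → Bool) : Fin r → Bool := Function.update x k (!(x k))

theorem flp_apply (k : Fin r) (x : Fin r → Bool) : flp k x k = !(x k) := by
  simp [flp]

theorem flp_apply_ne (k j : Fin r) (x : Fin r → Bool) (h : j ≠ k) : flp k x j = x j := by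
  simp [flp, Function.update_of_ne h]

theorem flp_flp (k : Fin r) (x : Fin r → Bool) : flp k (flp k x) = x := by
  funext j
  by_cases h : j = k
  · subst h; simp [flp_apply]
  · rw [flp_apply_ne _ _ _ h, flp_apply_ne _ _ _ h]

theorem flp_ne (k : Fin r) (x : Fin r → Bool) : flp k x ≠ x := by
  intro h
  have := congrFun h k
  rw [flp_apply] at this
  exact Bool.not_ne_self _ this

variable (r) in
/-- The generator attached to a cube edge. -/
def gen (v : V) (k : Fin r) (x : Fin r → Bool) : Sg V r := (v, k, Function.update x k false)

theorem gen_flp (v : V) (k : Fin r) (x : Fin r → Bool) : gen r v k (flp k x) = gen r v k x := by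
  simp [gen, flp, Function.update_idem]

variable (r) in
/-- The voltage of a cube edge. -/
noncomputable def vol (v : V) (k : Fin r) (x : Fin r → Bool) :
    Equiv.Perm (Ball (Sg V r) g) :=
  rho (Sg V r) g (gen r v k x, !(x k))

theorem vol_flp (v : V) (k : Fin r) (x : Fin r → Bool) :
    vol r g v k (flp k x) = (vol r g v k x)⁻¹ := by
  have h := rho_not (g := g) (gen r v k x, !(x k))
  simp only [Bool.not_not] at h
  rw [vol, vol, gen_flp, flp_apply, Bool.not_not, ← h]

variable (r) in
/-- The big `r`-regular graph. -/
noncomputable def bigGraph : SimpleGraph (Vrt V r g) where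
  Adj a b := (G.Adj a.1 b.1 ∧ a.2 = b.2) ∨
    (a.1 = b.1 ∧ ∃ k : Fin r, k.1 < r - G.degree a.1 ∧
      b.2.1 = flp k a.2.1 ∧ b.2.2 = vol r g a.1 k a.2.1 * a.2.2)
  symm := by
    constructor
    rintro a b (⟨h, h2⟩ | ⟨h, k, hk, h1, h2⟩)
    · exact Or.inl ⟨h.symm, h2.symm⟩
    · refine Or.inr ⟨h.symm, k, by rw [← h]; exact hk, ?_, ?_⟩
      · rw [h1, flp_flp]
      · rw [h1, vol_flp, h2, ← h]
        group
  loopless := by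
    constructor
    rintro a (⟨h, -⟩ | ⟨-, k, -, h1, -⟩)
    · exact G.loopless.irrefl _ h
    · exact flp_ne k a.2.1 h1.symm

variable {g}

/-- The letter (generator and sign) of a potential cube dart, `none` for copy edges. -/
def letter (a b : Vrt V r g) : Option (Sg V r × Bool) :=
  (Fin.find? fun k => decide (a.2.1 k ≠ b.2.1 k)).map fun k => (gen r a.1 k a.2.1, b.2.1 k)

theorem find_flp (k : Fin r) (x y : Fin r → Bool) (hy : y = flp k x) :
    Fin.find? (fun j => decide (x j ≠ y j)) = some k := by
  rw [Fin.find?_eq_some_iff]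
  simp only [decide_eq_true_eq, decide_eq_false_iff_not]
  constructor
  · rw [hy, flp_apply]
    exact fun h => Bool.not_ne_self _ h.symm
  · intro j hj h
    exact h (by rw [hy, flp_apply_ne k j x (ne_of_lt hj)])

variable {G}

theorem letter_eq_none {a b : Vrt V r g} (h : a.2.1 = b.2.1) : letter a b = none := by
  rw [letter, Option.map_eq_none_iff, Fin.find?_eq_none_iff]
  intro k
  simpa using congrFun h k

theorem adj_cases {a b : Vrt V r g} (h : (bigGraph G r g).Adj a b) :
    (G.Adj a.1 b.1 ∧ a.2 = b.2 ∧ letter a b = none) ∨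
    (∃ k : Fin r, k.1 < r - G.degree a.1 ∧ a.1 = b.1 ∧ b.2.1 = flp k a.2.1 ∧
      b.2.2 = vol r g a.1 k a.2.1 * a.2.2 ∧
      letter a b = some (gen r a.1 k a.2.1, !(a.2.1 k))) := by
  rcases h with ⟨h1, h2⟩ | ⟨h1, k, hk, h2, h3⟩
  · exact Or.inl ⟨h1, h2, letter_eq_none (congrArg Prod.fst h2)⟩
  · refine Or.inr ⟨k, hk, h1, h2, h3, ?_⟩
    rw [letter, find_flp k _ _ h2, Option.map_some, h2, flp_apply]

theorem letter_none {a b : Vrt V r g} (h : (bigGraph G r g).Adj a b)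
    (hl : letter a b = none) : G.Adj a.1 b.1 ∧ a.2 = b.2 := by
  rcases adj_cases h with ⟨h1, h2, -⟩ | ⟨k, -, -, -, -, h5⟩
  · exact ⟨h1, h2⟩
  · rw [hl] at h5; cases h5

theorem letter_some {a b : Vrt V r g} {t : Sg V r} {e : Bool}
    (h : (bigGraph G r g).Adj a b) (hl : letter a b = some (t, e)) :
    a.1 = t.1 ∧ b = (t.1, flp t.2.1 a.2.1, rho (Sg V r) g (t, e) * a.2.2) ∧
      e = !(a.2.1 t.2.1) ∧ t = gen r a.1 t.2.1 a.2.1 := by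
  rcases adj_cases h with ⟨-, -, h3⟩ | ⟨k, -, h2, h3, h4, h5⟩
  · rw [hl] at h3; cases h3
  · rw [hl] at h5
    obtain ⟨ht, he⟩ : t = gen r a.1 k a.2.1 ∧ e = !(a.2.1 k) := by
      have := Option.some.inj h5
      exact ⟨(Prod.mk.injEq _ _ _ _ ▸ this).1, (Prod.mk.injEq _ _ _ _ ▸ this).2⟩
    have htk : t.2.1 = k := by rw [ht]; rfl
    have ht1 : t.1 = a.1 := by rw [ht]; rfl
    refine ⟨ht1.symm, ?_, by rw [htk, he], by rw [htk, ht]⟩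
    have : rho (Sg V r) g (t, e) = vol r g a.1 k a.2.1 := by
      rw [vol, ht, he]
    rw [this, htk]
    simp only [Prod.ext_iff]
    exact ⟨h2.symm.trans ht1.symm, h3, h4⟩

theorem letter_some_rev {a b : Vrt V r g} {t : Sg V r} {e : Bool}
    (h : (bigGraph G r g).Adj a b) (hl : letter a b = some (t, e)) :
    letter b a = some (t, !e) := by
  obtain ⟨h1, h2, h3, h4⟩ := letter_some h hl
  set k := t.2.1 with hk
  have hb1 : b.1 = t.1 := by rw [h2]
  have hb2 : b.2.1 = flp k a.2.1 := by rw [h2]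
  rw [letter, find_flp k _ _ (by rw [hb2, flp_flp] : a.2.1 = flp k b.2.1), Option.map_some]
  congr 1
  rw [Prod.mk.injEq]
  constructor
  · rw [hb2, gen_flp, hb1]
    rw [← h1, hk]
    exact h4.symm
  · rw [h3, Bool.not_not]

/-- The word read along a walk. -/
noncomputable def lw {a b : Vrt V r g} (q : (bigGraph G r g).Walk a b) : List (Sg V r × Bool) :=
  (q.darts.map fun d => letter d.toProd.1 d.toProd.2).reduceOption

theorem lw_nil {a : Vrt V r g} : lw (SimpleGraph.Walk.nil : (bigGraph G r g).Walk a a) = [] :=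
  rfl

theorem lw_cons {a m b : Vrt V r g} (h : (bigGraph G r g).Adj a m)
    (q : (bigGraph G r g).Walk m b) :
    lw (SimpleGraph.Walk.cons h q) = ((letter a m).toList) ++ lw q := by
  rw [lw, SimpleGraph.Walk.darts_cons, List.map_cons]
  cases hl : letter (V := V) (r := r) (g := g) a m <;>
    simp [List.reduceOption_cons_of_some, hl, lw]

theorem length_lw_le {a b : Vrt V r g} (q : (bigGraph G r g).Walk a b) :
    (lw q).length ≤ q.length := by
  rw [lw]
  calc (q.darts.map fun d => letter d.toProd.1 d.toProd.2).reduceOption.length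
      ≤ (q.darts.map fun d => letter d.toProd.1 d.toProd.2).length :=
        List.reduceOption_length_le _
    _ = q.darts.length := List.length_map _
    _ = q.length := SimpleGraph.Walk.length_darts _

theorem adj_vol {a b : Vrt V r g} (h : (bigGraph G r g).Adj a b) :
    b.2.2 = (((letter a b).map (rho (Sg V r) g)).getD 1) * a.2.2 := by
  rcases adj_cases h with ⟨-, h2, h3⟩ | ⟨k, -, -, -, h4, h5⟩
  · rw [h3]
    simpa using (congrArg Prod.snd h2).symm
  · rw [h5, h4]
    rfl

theorem walk_group {a b : Vrt V r g} (q : (bigGraph G r g).Walk a b) :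
    b.2.2 = ((lw q).reverse.map (rho (Sg V r) g)).prod * a.2.2 := by
  induction q with
  | nil => rw [lw_nil]; simp
  | @cons a m b h q ih =>
    rw [lw_cons]
    cases hl : letter (V := V) (r := r) (g := g) a m with
    | none =>
      have := (adj_vol h)
      rw [hl] at this
      simp only [Option.map_none, Option.getD_none, one_mul] at this
      rw [ih, ← this]
      simp [hl]
    | some x =>
      have hv := adj_vol h
      rw [hl] at hv
      simp only [Option.map_some, Option.getD_some] at hv
      rw [ih, hv]
      simp [List.prod_append, mul_assoc]

/-- The canonical copy of `G` at a fixed pair of cube/group coordinates. -/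
def psi (c : (Fin r → Bool) × Equiv.Perm (Ball (Sg V r) g)) : G →g bigGraph G r g where
  toFun v := (v, c)
  map_rel' := fun h => Or.inl ⟨h, rfl⟩

theorem psi_injective (c : (Fin r → Bool) × Equiv.Perm (Ball (Sg V r) g)) :
    Function.Injective (psi (G := G) c) := by
  intro x y h
  exact congrArg Prod.fst h

theorem walk_proj {a b : Vrt V r g} (q : (bigGraph G r g).Walk a b) (h : lw q = []) :
    ∃ (h2 : b = (b.1, a.2)) (q₀ : G.Walk a.1 b.1),
      q.copy rfl h2 = q₀.map (psi a.2) := by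
  induction q with
  | nil => exact ⟨rfl, SimpleGraph.Walk.nil, rfl⟩
  | @cons a m b hadj q ih =>
    rw [lw_cons] at h
    have hlet : letter (V := V) (r := r) (g := g) a m = none := by
      cases hl : letter (V := V) (r := r) (g := g) a m
      · rfl
      · rw [hl] at h; simp at h
    rw [hlet] at h
    simp only [Option.toList_none, List.nil_append] at h
    obtain ⟨hG, hc⟩ := letter_none hadj hlet
    obtain ⟨m1, mc⟩ := m
    obtain ⟨a1, ac⟩ := a
    simp only at hc hG
    subst hc
    obtain ⟨h2, q₀, hq⟩ := ih h
    refine ⟨h2, SimpleGraph.Walk.cons hG q₀, ?_⟩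
    rw [SimpleGraph.Walk.copy_cons, SimpleGraph.Walk.map_cons, hq]
    rfl

open SimpleGraph Walk in
theorem first_dart {a b : Vrt V r g} (q : (bigGraph G r g).Walk a b) (t : Sg V r) (e : Bool)
    (L : List (Sg V r × Bool)) (h : lw q = (t, e) :: L) :
    (∃ (m : Vrt V r g) (hm : (bigGraph G r g).Adj a m) (q' : (bigGraph G r g).Walk m b),
        q = SimpleGraph.Walk.cons hm q' ∧ letter a m = some (t, e)) ∨
      ((t.1, a.2) ∈ q.support.tail) := by
  induction q with
  | nil => rw [lw_nil] at h; cases h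
  | @cons a m b hadj q ih =>
    rw [lw_cons] at h
    cases hl : letter (V := V) (r := r) (g := g) a m with
    | some x =>
      rw [hl] at h
      simp only [Option.toList_some, List.cons_append, List.cons.injEq] at h
      exact Or.inl ⟨m, hadj, q, rfl, by rw [hl, h.1]⟩
    | none =>
      rw [hl] at h
      simp only [Option.toList_none, List.nil_append] at h
      obtain ⟨hG, hc⟩ := letter_none hadj hl
      rcases ih h with ⟨m2, hm2, q', hq, hlet⟩ | hmem
      · right
        have hm1 : m.1 = t.1 := (letter_some hm2 hlet).1
        have hma : (t.1, a.2) = m := by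
          rw [Prod.ext_iff]; exact ⟨hm1.symm, hc⟩
        rw [SimpleGraph.Walk.support_cons, List.tail_cons, hma]
        exact SimpleGraph.Walk.start_mem_support q
      · right
        rw [SimpleGraph.Walk.support_cons, List.tail_cons, hc]
        exact List.mem_of_mem_tail hmem

theorem cancel_back {a m : Vrt V r g} {t : Sg V r} {e : Bool}
    (hadj : (bigGraph G r g).Adj a m) (hl : letter a m = some (t, e))
    {m2 : Vrt V r g} (hm2 : (bigGraph G r g).Adj m m2)
    (hlet : letter m m2 = some (t, !e)) : m2 = a := by
  obtain ⟨h1, h2, h3, h4⟩ := letter_some hadj hl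
  obtain ⟨h1', h2', h3', h4'⟩ := letter_some hm2 hlet
  rw [Prod.ext_iff, Prod.ext_iff]
  refine ⟨?_, ?_, ?_⟩
  · rw [h2']; exact h1.symm
  · rw [h2', h2]
    show flp t.2.1 ((flp t.2.1 a.2.1)) = a.2.1
    exact flp_flp _ _
  · rw [h2', h2]
    show rho (Sg V r) g (t, !e) * (rho (Sg V r) g (t, e) * a.2.2) = a.2.2
    rw [rho_not (t, e)]
    simp

theorem path_red {a b : Vrt V r g} (q : (bigGraph G r g).Walk a b) (hq : q.IsPath) :
    IsRed (lw q) := by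
  induction q with
  | nil => exact List.isChain_nil
  | @cons a m b hadj q ih =>
    rw [SimpleGraph.Walk.cons_isPath_iff] at hq
    have ihq := ih hq.1
    rw [lw_cons]
    cases hl : letter (V := V) (r := r) (g := g) a m with
    | none => exact ihq
    | some x =>
      simp only [Option.toList_some, List.singleton_append]
      unfold IsRed List.Chain'
      rw [List.isChain_cons]
      refine ⟨?_, ihq⟩
      rintro ⟨t', e'⟩ hy ⟨hy1, hy2⟩
      obtain ⟨t, e⟩ := x
      simp only at hy1 hy2
      subst hy1
      subst hy2
      have hlwq : lw q = (t, e') :: (lw q).tail := List.eq_cons_of_mem_head? hy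
      rcases first_dart q t e' _ hlwq with ⟨m2, hm2, q', hq', hlet⟩ | hmem
      · have hm2a : m2 = a :=
          cancel_back hadj hl hm2 (by rw [Bool.not_not]; exact hlet)
        subst hm2a
        subst hq'
        refine hq.2 ?_
        rw [SimpleGraph.Walk.support_cons]
        exact List.mem_cons_of_mem _ (SimpleGraph.Walk.start_mem_support q')
      · have hm1 : m.1 = t.1 :=
          congrArg Prod.fst (letter_some hadj hl).2.1
        have : (t.1, m.2) = m := by rw [Prod.ext_iff]; exact ⟨hm1.symm, rfl⟩
        rw [this] at hmem
        have hnd := hq.1.support_nodup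
        rw [SimpleGraph.Walk.support_eq_cons] at hnd
        exact (List.nodup_cons.1 hnd).1 hmem

theorem cycle_red {z : Vrt V r g} (p : (bigGraph G r g).Walk z z) (hp : p.IsCycle) :
    IsRed (lw p) := by
  cases p with
  | nil => exact absurd rfl hp.ne_nil
  | @cons _ m _ hadj q =>
    rw [SimpleGraph.Walk.cons_isCycle_iff] at hp
    have ihq := path_red q hp.1
    rw [lw_cons]
    cases hl : letter (V := V) (r := r) (g := g) z m with
    | none => exact ihq
    | some x =>
      simp only [Option.toList_some, List.singleton_append]
      unfold IsRed List.Chain'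
      rw [List.isChain_cons]
      refine ⟨?_, ihq⟩
      rintro ⟨t', e'⟩ hy ⟨hy1, hy2⟩
      obtain ⟨t, e⟩ := x
      simp only at hy1 hy2
      subst hy1
      subst hy2
      have hlwq : lw q = (t, e') :: (lw q).tail := List.eq_cons_of_mem_head? hy
      rcases first_dart q t e' _ hlwq with ⟨m2, hm2, q', hq', hlet⟩ | hmem
      · have hm2a : m2 = z :=
          cancel_back hadj hl hm2 (by rw [Bool.not_not]; exact hlet)
        subst hm2a
        subst hq'
        refine hp.2 ?_
        rw [SimpleGraph.Walk.edges_cons]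
        exact List.mem_cons.2 (Or.inl Sym2.eq_swap)
      · have hm1 : m.1 = t.1 :=
          congrArg Prod.fst (letter_some hadj hl).2.1
        have : (t.1, m.2) = m := by rw [Prod.ext_iff]; exact ⟨hm1.symm, rfl⟩
        rw [this] at hmem
        have hnd := hp.1.support_nodup
        rw [SimpleGraph.Walk.support_eq_cons] at hnd
        exact (List.nodup_cons.1 hnd).1 hmem

theorem egirth_big (hge : (g : ℕ∞) ≤ G.egirth) : (g : ℕ∞) ≤ (bigGraph G r g).egirth := by
  rw [SimpleGraph.le_egirth]
  intro z p hp
  by_contra hlt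
  rw [not_le] at hlt
  have hlen : p.length < g := by exact_mod_cast hlt
  cases hl : lw p with
  | nil =>
    obtain ⟨h2, q₀, hq⟩ := walk_proj p hl
    have hpc : p.copy rfl h2 = p := by
      rw [Subsingleton.elim h2 rfl, SimpleGraph.Walk.copy_rfl_rfl]
    rw [hpc] at hq
    have hq₀ : q₀.IsCycle := by
      rw [← SimpleGraph.Walk.map_isCycle_iff_of_injective (psi_injective (G := G) z.2), ← hq]
      exact hp
    have h1 : G.egirth ≤ q₀.length := SimpleGraph.le_egirth.mp le_rfl z.1 q₀ hq₀
    have h2 : q₀.length = p.length := by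
      rw [hq]; exact (SimpleGraph.Walk.length_map _ _).symm
    rw [h2] at h1
    have := le_trans hge h1
    rw [Nat.cast_le] at this
    omega
  | cons x L =>
    have hred : IsRed (lw p) := cycle_red p hp
    have hgrp := walk_group p
    have hone : ((lw p).reverse.map (rho (Sg V r) g)).prod = 1 := right_eq_mul.mp hgrp
    refine prod_ne_one ((lw p).reverse) hred.reverse ?_ ?_ hone
    · rw [hl]; simp
    · rw [List.length_reverse]
      exact le_trans (length_lw_le p) (le_of_lt hlen)

theorem degree_big (hdeg : ∀ v : V, G.degree v ≤ r) (a : Vrt V r g) :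
    Nat.card ((bigGraph G r g).neighborSet a) = r := by
  have e : (G.neighborSet a.1 ⊕ Fin (r - G.degree a.1)) ≃
      (bigGraph G r g).neighborSet a := by
    apply Equiv.ofBijective (f := fun s => match s with
      | Sum.inl u => ⟨(u.1, a.2), Or.inl ⟨u.2, rfl⟩⟩
      | Sum.inr j => ⟨(a.1, flp ⟨j.1, lt_of_lt_of_le j.2 (Nat.sub_le r _)⟩ a.2.1,
          vol r g a.1 ⟨j.1, lt_of_lt_of_le j.2 (Nat.sub_le r _)⟩ a.2.1 * a.2.2),
          Or.inr ⟨rfl, ⟨j.1, lt_of_lt_of_le j.2 (Nat.sub_le r _)⟩, j.2, rfl, rfl⟩⟩)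
    constructor
    · rintro (u | j) (u' | j') h
      · have := congrArg (fun z => (Subtype.val z).1) h
        simp only at this
        exact congrArg Sum.inl (Subtype.ext this)
      · exfalso
        have := congrArg (fun z => (Subtype.val z).2.1) h
        simp only at this
        exact flp_ne _ _ this.symm
      · exfalso
        have := congrArg (fun z => (Subtype.val z).2.1) h
        simp only at this
        exact flp_ne _ _ this
      · have hx := congrArg (fun z => (Subtype.val z).2.1) h
        simp only at hx
        have hjj : j.1 = j'.1 := by
          by_contra hne
          have h1 := congrFun hx ⟨j.1, lt_of_lt_of_le j.2 (Nat.sub_le r _)⟩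
          rw [flp_apply, flp_apply_ne] at h1
          · exact Bool.not_ne_self _ h1
          · exact fun hh => hne (Fin.mk.inj hh)
        exact congrArg Sum.inr (Fin.ext hjj)
    · rintro ⟨b, hb⟩
      rcases adj_cases hb with ⟨h1, h2, -⟩ | ⟨k, hk, h1, h2, h3, -⟩
      · refine ⟨Sum.inl ⟨b.1, h1⟩, ?_⟩
        apply Subtype.ext
        show ((b.1 : V), a.2) = b
        rw [Prod.ext_iff]
        exact ⟨rfl, h2⟩
      · refine ⟨Sum.inr ⟨k.1, hk⟩, ?_⟩
        apply Subtype.ext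
        have hkk : (⟨k.1, lt_of_lt_of_le hk (Nat.sub_le r _)⟩ : Fin r) = k :=
          Fin.ext rfl
        show (a.1, flp ⟨k.1, _⟩ a.2.1, vol r g a.1 ⟨k.1, _⟩ a.2.1 * a.2.2) = b
        rw [hkk, Prod.ext_iff, Prod.ext_iff]
        exact ⟨h1, h2.symm, h3.symm⟩
  rw [← Nat.card_congr e, Nat.card_sum, Nat.card_eq_fintype_card, Nat.card_eq_fintype_card,
    SimpleGraph.card_neighborSet_eq_degree, Fintype.card_fin]
  exact Nat.add_sub_cancel' (hdeg a.1)

theorem psi_adj_iff (c : (Fin r → Bool) × Equiv.Perm (Ball (Sg V r) g)) (x y : V) :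
    G.Adj x y ↔ (bigGraph G r g).Adj (x, c) (y, c) := by
  constructor
  · exact fun h => Or.inl ⟨h, rfl⟩
  · rintro (⟨h, -⟩ | ⟨-, k, -, h2, -⟩)
    · exact h
    · exact absurd h2.symm (flp_ne k c.1)

end Graph

end EmbedRegAux


/-- Every finite graph with maximum degree at most `r ≥ 1` and girth at least `g` embeds
as an induced subgraph of a finite `r`-regular graph with girth at least `g`. -/
theorem embed_into_regular_graph_preserving_girth (r : ℕ) (hr : 1 ≤ r) (g : ℕ)
    (V : Type) [Fintype V] (G : SimpleGraph V) [DecidableRel G.Adj]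
    (hdeg : ∀ v : V, G.degree v ≤ r) (hgirth : (g : ℕ∞) ≤ G.girth) :
    ∃ (V' : Type) (_ : Fintype V') (G' : SimpleGraph V'),
      (∀ v' : V', Nat.card (G'.neighborSet v') = r) ∧
      (g : ℕ∞) ≤ G'.girth ∧
      ∃ f : V → V', Function.Injective f ∧
        ∀ a b : V, G.Adj a b ↔ G'.Adj (f a) (f b) := by
  letI : DecidableEq V := Classical.decEq V
  letI : DecidableEq (EmbedRegAux.Ball (EmbedRegAux.Sg V r) g) := Subtype.instDecidableEq
  letI : Fintype (EmbedRegAux.Vrt V r g) := inferInstance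
  refine ⟨EmbedRegAux.Vrt V r g, inferInstance, EmbedRegAux.bigGraph G r g,
    fun a => EmbedRegAux.degree_big hdeg a, ?_,
    (fun v => (v, (fun _ => false, 1))), (fun x y h => congrArg Prod.fst h),
    fun a b => EmbedRegAux.psi_adj_iff _ a b⟩
  rcases Nat.eq_zero_or_pos g with hg | hg
  · subst hg; simp
  · have hcyc : ¬ G.IsAcyclic := by
      intro hA
      rw [hA.girth_eq_zero] at hgirth
      simp only [Nat.cast_zero, nonpos_iff_eq_zero, Nat.cast_eq_zero] at hgirth
      omega
    have hge : (g : ℕ∞) ≤ G.egirth := by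
      have h1 : (G.girth : ℕ∞) = G.egirth := by
        rw [SimpleGraph.girth]
        exact ENat.coe_toNat (by rwa [Ne, SimpleGraph.egirth_eq_top])
      rw [← h1]; exact hgirth
    have hbig := EmbedRegAux.egirth_big (G := G) (r := r) hge
    have hcyc' : ¬ (EmbedRegAux.bigGraph G r g).IsAcyclic := by
      obtain ⟨v, c, hc⟩ : ∃ (v : V) (c : G.Walk v v), c.IsCycle := by
        by_contra h
        push_neg at h
        exact hcyc fun v c => h v c
      intro hA
      exact hA _ ((SimpleGraph.Walk.map_isCycle_iff_of_injective
        (EmbedRegAux.psi_injective (G := G) (fun _ => false, 1))).2 hc)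
    have h2 : ((EmbedRegAux.bigGraph G r g).girth : ℕ∞)
        = (EmbedRegAux.bigGraph G r g).egirth := by
      rw [SimpleGraph.girth]
      exact ENat.coe_toNat (by rwa [Ne, SimpleGraph.egirth_eq_top])
    rw [h2]
    exact hbig
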